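/- With κ = 1 - ε for ε ∈ [0,1), the sequence P̃_n(ε) = 1 - exp(-κ · n^{1 - 2κ}) (the approximate network breakdown probability of the Rayleigh SISO model with η = 2 and β = πn/(2 ln n)) converges to 0 as n → ∞ if ε < 1/2, and converges to 1 if ε > 1/2. -/
import Mathlib


open Real Filter

/-- With `κ = 1 - ε`, `ε ∈ [0,1)`, the approximate network breakdown probability
`P̃_n(ε) = 1 - exp(-κ n^{1-2κ})` of the Rayleigh SISO model (`η = 2`, `β = πn/(2 ln n)`)
tends to `0` if `ε < 1/2` and to `1` if `ε > 1/2`. -/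
theorem breakdown_threshold_eta_two (ε : ℝ) (hε : ε ∈ Set.Ico (0 : ℝ) 1) :
    (ε < 1 / 2 →
      Tendsto (fun n : ℕ => 1 - Real.exp (-((1 - ε) * (n : ℝ) ^ (1 - 2 * (1 - ε)))))
        atTop (nhds 0)) ∧
    (ε > 1 / 2 →
      Tendsto (fun n : ℕ => 1 - Real.exp (-((1 - ε) * (n : ℝ) ^ (1 - 2 * (1 - ε)))))
        atTop (nhds 1)) := by
  obtain ⟨hε0, hε1⟩ := hε
  have hnat : Tendsto (fun n : ℕ => (n : ℝ)) atTop atTop :=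
    tendsto_natCast_atTop_atTop
  constructor
  · intro h
    have hneg : 1 - 2 * (1 - ε) < 0 := by linarith
    have h1 : Tendsto (fun n : ℕ => (n : ℝ) ^ (1 - 2 * (1 - ε))) atTop (nhds 0) :=
      ((tendsto_rpow_neg_atTop (by linarith : 0 < -(1 - 2 * (1 - ε)))).comp hnat).congr
        (fun n => by simp [Function.comp])
    have h2 : Tendsto (fun n : ℕ => -((1 - ε) * (n : ℝ) ^ (1 - 2 * (1 - ε)))) atTop (nhds 0) := by
      have := (h1.const_mul (1 - ε)).neg
      simpa using this
    have h3 := (Real.continuous_exp.tendsto 0).comp h2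
    simp only [Function.comp, Real.exp_zero] at h3
    have := (tendsto_const_nhds (x := (1:ℝ)) (f := atTop)).sub h3
    simpa using this
  · intro h
    have hpos : 0 < 1 - 2 * (1 - ε) := by linarith
    have h1 : Tendsto (fun n : ℕ => (n : ℝ) ^ (1 - 2 * (1 - ε))) atTop atTop :=
      (tendsto_rpow_atTop hpos).comp hnat
    have h2 : Tendsto (fun n : ℕ => -((1 - ε) * (n : ℝ) ^ (1 - 2 * (1 - ε)))) atTop atBot := by
      have := tendsto_neg_atBot_iff.mpr (h1.const_mul_atTop (by linarith : (0:ℝ) < 1 - ε))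
      simpa using this
    have h3 := Real.tendsto_exp_atBot.comp h2
    have := (tendsto_const_nhds (x := (1:ℝ)) (f := atTop)).sub h3
    simpa using this
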